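/- Let r and n be positive natural numbers and let B be an r × n matrix over ZMod 2 that has at least one zero column (i.e. there exists j₀ : Fin n with B i j₀ = 0 for all i). Then there exist an n × n matrix A over ZMod 2 that is strictly upper triangular (A i j = 0 whenever j ≤ i) and a permutation σ of Fin n such that for every c : Fin n → ZMod 2, one has ∑ j, c j • (column σ(j) of B) = 0 if and only if ∑ j, c j • (column j of A) = 0. In other words, the columns of B (reindexed by σ) and the columns of A satisfy exactly the same linear dependencies, so A and B represent isomorphic binary matroids. -/

import Mathlib

theorem exists_strictly_upper_triangular_same_dependencies
    (r n : ℕ) (hr : 0 < r) (hn : 0 < n)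
    (B : Matrix (Fin r) (Fin n) (ZMod 2))
    (hzero : ∃ j₀ : Fin n, ∀ i : Fin r, B i j₀ = 0) :
    ∃ (A : Matrix (Fin n) (Fin n) (ZMod 2)) (σ : Equiv.Perm (Fin n)),
      (∀ i j : Fin n, j ≤ i → A i j = 0) ∧
      ∀ c : Fin n → ZMod 2,
        (∑ j : Fin n, c j • (fun i : Fin r => B i (σ j))) = 0 ↔
        (∑ j : Fin n, c j • (fun i : Fin n => A i j)) = 0 := by
  classical
  obtain ⟨j₀, hj₀⟩ := hzero
  set col : Fin n → (Fin r → ZMod 2) := fun j i => B i j with hcoldef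
  have hcol0 : col j₀ = 0 := funext hj₀
  obtain ⟨b, hbsub, hbspan, hbli⟩ := exists_linearIndependent (ZMod 2) (Set.range col)
  haveI : Fintype b := ((Set.finite_range col).subset hbsub).fintype
  set d := Fintype.card b with hd
  let β : Fin d ≃ b := (Fintype.equivFin b).symm
  let v : Fin d → (Fin r → ZMod 2) := fun k => (β k : Fin r → ZMod 2)
  have hv_li : LinearIndependent (ZMod 2) v := hbli.comp β β.injective
  have hrange : Set.range v = b := by
    ext x; constructor
    · rintro ⟨k, rfl⟩; exact (β k).2
    · intro hx; exact ⟨β.symm ⟨x, hx⟩, by simp [v]⟩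
  set W := Submodule.span (ZMod 2) (Set.range v) with hW
  have hmem : ∀ j, col j ∈ W := by
    intro j
    rw [hW, hrange, hbspan]
    exact Submodule.subset_span ⟨j, rfl⟩
  let basis : Module.Basis (Fin d) (ZMod 2) W := Module.Basis.span hv_li
  -- index choices for basis vectors
  have hidx : ∀ k : Fin d, ∃ j, col j = v k := fun k => hbsub (β k).2
  choose idx hidxspec using hidx
  have hidxne : ∀ k, idx k ≠ j₀ := by
    intro k h
    exact hv_li.ne_zero k (by rw [← hidxspec k, h, hcol0])
  have hidxinj : Function.Injective idx := by
    intro k l h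
    exact hv_li.injective (by rw [← hidxspec k, ← hidxspec l, h])
  let g : Fin (d + 1) → Fin n := fun k => Fin.cases j₀ idx k
  have ginj : Function.Injective g := by
    intro a c h
    induction a using Fin.cases with
    | zero =>
      induction c using Fin.cases with
      | zero => rfl
      | succ c => simp only [g, Fin.cases_zero, Fin.cases_succ] at h
                  exact absurd h.symm (hidxne c)
    | succ a =>
      induction c using Fin.cases with
      | zero => simp only [g, Fin.cases_zero, Fin.cases_succ] at h
                exact absurd h (hidxne a)
      | succ c => simp only [g, Fin.cases_succ] at h
                  exact congrArg Fin.succ (hidxinj h)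
  have hdn : d + 1 ≤ n := by
    simpa using Fintype.card_le_of_injective g ginj
  -- build the permutation
  set q : Fin n → Prop := fun j => ∃ k, g k = j with hq
  let e₀ : Fin (d + 1) ≃ {j // q j} :=
    Equiv.ofBijective (fun k => ⟨g k, k, rfl⟩)
      (by
        constructor
        · intro a c h
          exact ginj (congrArg Subtype.val h)
        · rintro ⟨j, k, rfl⟩; exact ⟨k, rfl⟩)
  have hcardq : Fintype.card {j // q j} = d + 1 :=
    (Fintype.card_congr e₀.symm).trans (Fintype.card_fin _)
  let e₂ : Fin (n - (d + 1)) ≃ {j // ¬ q j} :=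
    Fintype.equivOfCardEq (by
      rw [Fintype.card_fin, Fintype.card_subtype_compl, hcardq, Fintype.card_fin])
  have h' : d + 1 + (n - (d + 1)) = n := Nat.add_sub_cancel' hdn
  let σ : Equiv.Perm (Fin n) :=
    (finCongr h').symm.trans ((finSumFinEquiv.symm).trans
      ((e₀.sumCongr e₂).trans (Equiv.sumCompl q)))
  have hσ : ∀ (t : ℕ) (ht : t < d + 1), σ ⟨t, ht.trans_le hdn⟩ = g ⟨t, ht⟩ := by
    intro t ht
    show (Equiv.sumCompl q) ((e₀.sumCongr e₂)
      (finSumFinEquiv.symm ((finCongr h').symm ⟨t, ht.trans_le hdn⟩))) = g ⟨t, ht⟩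
    have h1 : (finCongr h').symm ⟨t, ht.trans_le hdn⟩
        = Fin.castAdd (n - (d + 1)) ⟨t, ht⟩ := by
      ext; simp
    rw [h1, finSumFinEquiv_symm_apply_castAdd]
    simp [e₀]
    rfl
  -- the embedding linear map
  let L : W →ₗ[ZMod 2] (Fin n → ZMod 2) :=
    { toFun := fun w i => if h : (i : ℕ) < d then basis.repr w ⟨i, h⟩ else 0
      map_add' := by
        intro w w'; funext i; by_cases h : (i : ℕ) < d <;> simp [h]
      map_smul' := by
        intro m w; funext i; by_cases h : (i : ℕ) < d <;> simp [h] }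
  have hLapply : ∀ (w : W) (i : Fin n),
      L w i = if h : (i : ℕ) < d then basis.repr w ⟨i, h⟩ else 0 := fun _ _ => rfl
  have hLinj : ∀ w : W, L w = 0 → w = 0 := by
    intro w hw
    have hrepr : basis.repr w = 0 := by
      ext k
      have hk : (k : ℕ) < d := k.2
      have hkn : (k : ℕ) < n := hk.trans_le (Nat.le_of_succ_le hdn)
      have := congrFun hw ⟨k, hkn⟩
      rw [hLapply] at this
      rw [dif_pos hk] at this
      simpa using this
    exact (LinearEquiv.map_eq_zero_iff basis.repr).mp hrepr
  let colW : Fin n → W := fun j => ⟨col j, hmem j⟩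
  refine ⟨Matrix.of fun i j => L (colW (σ j)) i, σ, ?_, ?_⟩
  · -- strictly upper triangular
    intro i j hji
    show L (colW (σ j)) i = 0
    by_cases hj : (j : ℕ) < d + 1
    · have h1 : σ j = g ⟨j, hj⟩ := by
        have := hσ j hj
        rwa [Fin.eta] at this
      rcases Nat.eq_zero_or_pos (j : ℕ) with hj0 | hjpos
      · -- j = 0 : the zero column
        have hg : g ⟨(j : ℕ), hj⟩ = j₀ := by
          have : (⟨(j : ℕ), hj⟩ : Fin (d + 1)) = 0 := by ext; simpa using hj0
          rw [this]; rfl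
        have hcw : colW (σ j) = 0 := by
          rw [h1, hg]
          exact Subtype.ext hcol0
        rw [hcw, map_zero]; rfl
      · -- j ≥ 1 : a basis column
        obtain ⟨m, hm⟩ : ∃ m : ℕ, (j : ℕ) = m + 1 :=
          ⟨(j : ℕ) - 1, by omega⟩
        have hmd : m < d := by omega
        have hg : g ⟨(j : ℕ), hj⟩ = idx ⟨m, hmd⟩ := by
          have : (⟨(j : ℕ), hj⟩ : Fin (d + 1)) = Fin.succ ⟨m, hmd⟩ := by
            ext; simp [hm]
          rw [this]
          exact Fin.cases_succ _
        have hcw : colW (σ j) = basis ⟨m, hmd⟩ := by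
          rw [h1, hg]
          apply Subtype.ext
          rw [Module.Basis.span_apply]
          exact hidxspec ⟨m, hmd⟩
        rw [hcw, hLapply]
        by_cases hi : (i : ℕ) < d
        · rw [dif_pos hi]
          rw [Module.Basis.repr_self]
          rw [Finsupp.single_apply]
          rw [if_neg]
          intro hcontra
          have : m = (i : ℕ) := congrArg Fin.val hcontra
          have hji' : (j : ℕ) ≤ (i : ℕ) := hji
          omega
        · rw [dif_neg hi]
    · -- j ≥ d + 1 : entry vanishes since i ≥ j > d
      rw [hLapply, dif_neg]
      have hji' : (j : ℕ) ≤ (i : ℕ) := hji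
      omega
  · -- same dependencies
    intro c
    show (∑ j : Fin n, c j • col (σ j)) = 0 ↔
      (∑ j : Fin n, c j • (fun i : Fin n => L (colW (σ j)) i)) = 0
    have hsum : (∑ j : Fin n, c j • (fun i : Fin n => L (colW (σ j)) i))
        = L (∑ j : Fin n, c j • colW (σ j)) := by
      rw [map_sum]
      refine Finset.sum_congr rfl fun j _ => ?_
      rw [map_smul]
    have hcoe : ((∑ j : Fin n, c j • colW (σ j) : W) : Fin r → ZMod 2)
        = ∑ j : Fin n, c j • col (σ j) := by
      push_cast
      rfl
    rw [hsum]
    constructor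
    · intro h
      have h0 : (∑ j : Fin n, c j • colW (σ j)) = 0 := by
        rw [← ZeroMemClass.coe_eq_zero, hcoe]
        exact h
      rw [h0]; exact map_zero L
    · intro h
      have h0 := hLinj _ h
      rw [← hcoe, h0]; simp
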